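/- Every simple regular matroid has a unique minimal tropical basis. -/

import Mathlib

open scoped symmDiff

/-- A matroid presented by its circuit set on ground set `Fin n`. -/
structure CircuitSet (n : ℕ) where
  circuits : Set (Finset (Fin n))
  empty_not_mem : ∅ ∉ circuits
  antichain : ∀ C₁ ∈ circuits, ∀ C₂ ∈ circuits, C₁ ⊆ C₂ → C₁ = C₂
  elimination : ∀ C₁ ∈ circuits, ∀ C₂ ∈ circuits, C₁ ≠ C₂ →
    ∀ e ∈ C₁ ∩ C₂, ∃ C₃ ∈ circuits, C₃ ⊆ (C₁ ∪ C₂) \ {e}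

/-- Tropical projective space: tuples in (ℝ ∪ {±∞})ᵀ, not identically -∞
(we model tropical numbers ℝ ∪ {-∞} inside `EReal`; points of `TP` avoid `⊤` as well). -/
def TP (n : ℕ) : Set (Fin n → EReal) :=
  {x | (∀ i, x i ≠ ⊤) ∧ ∃ i, x i ≠ ⊥}

/-- The tropical hyperplane of a circuit: the maximum over the circuit is attained twice. -/
def V {n : ℕ} (D : Finset (Fin n)) : Set (Fin n → EReal) :=
  {x | ∃ i ∈ D, ∃ j ∈ D, i ≠ j ∧ x i = x j ∧ ∀ k ∈ D, x k ≤ x i}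

/-- `B` is a tropical basis: a subset of the circuit set whose tropical prevariety
equals the Bergman fan. -/
def IsTropicalBasis {n : ℕ} (M : CircuitSet n) (B : Set (Finset (Fin n))) : Prop :=
  B ⊆ M.circuits ∧ (TP n ∩ ⋂ D ∈ B, V D) = (TP n ∩ ⋂ D ∈ M.circuits, V D)

def IsMinimalTropicalBasis {n : ℕ} (M : CircuitSet n) (B : Set (Finset (Fin n))) : Prop :=
  IsTropicalBasis M B ∧ ∀ B' ⊂ B, ¬ IsTropicalBasis M B'

def HasUniqueMinimalTropicalBasis {n : ℕ} (M : CircuitSet n) : Prop :=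
  ∃! B, IsMinimalTropicalBasis M B

/-- The intersection `B_M` of all tropical bases of `M`. -/
def troBasisInter {n : ℕ} (M : CircuitSet n) : Set (Finset (Fin n)) :=
  ⋂₀ {B | IsTropicalBasis M B}

/-- Simple matroid: every circuit has cardinality at least 3. -/
def CircuitSet.Simple {n : ℕ} (M : CircuitSet n) : Prop :=
  ∀ C ∈ M.circuits, 3 ≤ C.card

/-- Binary matroid (circuit characterization): the symmetric difference of any two
circuits is a disjoint union of circuits. -/
def CircuitSet.BinarySD {n : ℕ} (M : CircuitSet n) : Prop :=
  ∀ C₁ ∈ M.circuits, ∀ C₂ ∈ M.circuits,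
    ∃ S : Finset (Finset (Fin n)), ↑S ⊆ M.circuits ∧
      (S : Set (Finset (Fin n))).PairwiseDisjoint id ∧ C₁ ∆ C₂ = S.sup id

/-- `M` is representable over the field `K`: its circuits are exactly the minimal
linearly dependent subsets of some family of vectors. -/
def Represents (K : Type) [Field K] {n : ℕ} (M : CircuitSet n) : Prop :=
  ∃ (m : ℕ) (v : Fin n → (Fin m → K)),
    ∀ C : Finset (Fin n), C ∈ M.circuits ↔
      (¬ LinearIndependent K (fun i : ↥C => v i.1) ∧
        ∀ D : Finset (Fin n), D ⊂ C → LinearIndependent K (fun i : ↥D => v i.1))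


section Binary
variable {n m : ℕ} (M : CircuitSet n) (v : Fin n → (Fin m → ZMod 2))
variable (hv : ∀ C : Finset (Fin n), C ∈ M.circuits ↔
      (¬ LinearIndependent (ZMod 2) (fun i : ↥C => v i.1) ∧
        ∀ D : Finset (Fin n), D ⊂ C → LinearIndependent (ZMod 2) (fun i : ↥D => v i.1)))

include hv

/-- Within a dependent set there is a circuit. -/
lemma exists_circuit_subset : ∀ N : ℕ, ∀ Z : Finset (Fin n), Z.card ≤ N →
    ¬ LinearIndependent (ZMod 2) (fun i : ↥Z => v i.1) → ∃ C ∈ M.circuits, C ⊆ Z := by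
  intro N
  induction N with
  | zero =>
    intro Z hcard hdep
    interval_cases h : Z.card
    · exfalso; apply hdep
      rw [Finset.card_eq_zero.mp h]
      exact linearIndependent_empty_type
  | succ N ih =>
    intro Z hcard hdep
    by_cases hall : ∀ D : Finset (Fin n), D ⊂ Z → LinearIndependent (ZMod 2) (fun i : ↥D => v i.1)
    · exact ⟨Z, (hv Z).mpr ⟨hdep, hall⟩, subset_rfl⟩
    · push_neg at hall
      obtain ⟨D, hDZ, hDdep⟩ := hall
      obtain ⟨C, hC, hCD⟩ := ih D (by have := Finset.card_lt_card hDZ; omega) hDdep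
      exact ⟨C, hC, hCD.trans hDZ.subset⟩
end Binary

section Binary2
variable {n m : ℕ} (M : CircuitSet n) (v : Fin n → (Fin m → ZMod 2))
variable (hv : ∀ C : Finset (Fin n), C ∈ M.circuits ↔
      (¬ LinearIndependent (ZMod 2) (fun i : ↥C => v i.1) ∧
        ∀ D : Finset (Fin n), D ⊂ C → LinearIndependent (ZMod 2) (fun i : ↥D => v i.1)))
include hv

/-- Over F₂, a nonempty set whose vectors sum to zero is dependent. -/
lemma dep_of_sum_zero (Z : Finset (Fin n)) (hne : Z.Nonempty)
    (hsum : ∑ a ∈ Z, v a = 0) : ¬ LinearIndependent (ZMod 2) (fun i : ↥Z => v i.1) := by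
  rw [Fintype.not_linearIndependent_iff]
  refine ⟨fun _ => 1, ?_, ⟨⟨hne.choose, hne.choose_spec⟩, one_ne_zero⟩⟩
  simp only [one_smul]
  rw [← hsum]
  exact Finset.sum_coe_sort Z v

/-- The vectors of a circuit sum to zero over F₂. -/
lemma circuit_sum_zero (C : Finset (Fin n)) (hC : C ∈ M.circuits) :
    ∑ a ∈ C, v a = 0 := by
  obtain ⟨hdep, hmin⟩ := (hv C).mp hC
  rw [Fintype.not_linearIndependent_iff] at hdep
  obtain ⟨g, hsum, i₀, hi₀⟩ := hdep
  classical
  set G : Fin n → ZMod 2 := fun a => if h : a ∈ C then g ⟨a, h⟩ else 0 with hG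
  set S : Finset (Fin n) := C.filter (fun a => G a ≠ 0) with hS
  have hSC : S ⊆ C := Finset.filter_subset _ _
  have hsum' : ∑ a ∈ S, v a = 0 := by
    have h1 : ∀ a ∈ S, v a = G a • v a := by
      intro a ha
      have : G a ≠ 0 := (Finset.mem_filter.mp ha).2
      have : G a = 1 := by revert this; generalize G a = x; revert x; decide
      rw [this, one_smul]
    rw [Finset.sum_congr rfl h1]
    rw [Finset.sum_subset hSC (by
      intro a haC haS
      have : G a = 0 := by
        by_contra hh
        exact haS (Finset.mem_filter.mpr ⟨haC, hh⟩)
      rw [this, zero_smul])]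
    rw [← hsum]
    rw [← Finset.sum_coe_sort C (fun a => G a • v a)]
    congr 1
    ext i
    simp only [hG, dif_pos i.2]
  have hSeqC : S = C := by
    by_contra hne
    have hSsub : S ⊂ C := ⟨hSC, fun h => hne (subset_antisymm hSC h)⟩
    have hLI := hmin S hSsub
    have hi₀S : (i₀ : Fin n) ∈ S := by
      refine Finset.mem_filter.mpr ⟨i₀.2, ?_⟩
      simpa only [hG, dif_pos i₀.2] using hi₀
    exact dep_of_sum_zero M v hv S ⟨i₀, hi₀S⟩ hsum' hLI
  rwa [hSeqC] at hsum'

/-- A set of vectors summing to zero over F₂ decomposes into disjoint circuits. -/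
lemma decomp_of_sum_zero : ∀ N : ℕ, ∀ Z : Finset (Fin n), Z.card ≤ N →
    (∑ a ∈ Z, v a = 0) →
    ∃ S : Finset (Finset (Fin n)), ↑S ⊆ M.circuits ∧
      (S : Set (Finset (Fin n))).PairwiseDisjoint id ∧ Z = S.sup id := by
  intro N
  induction N with
  | zero =>
    intro Z hcard _
    have : Z = ∅ := Finset.card_eq_zero.mp (by omega)
    exact ⟨∅, by simp, by simp, by simp [this]⟩
  | succ N ih =>
    intro Z hcard hsum
    rcases Z.eq_empty_or_nonempty with rfl | hne
    · exact ⟨∅, by simp, by simp, by simp⟩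
    · obtain ⟨C, hC, hCZ⟩ := exists_circuit_subset M v hv Z.card Z le_rfl
        (dep_of_sum_zero M v hv Z hne hsum)
      have hCsum := circuit_sum_zero M v hv C hC
      have hCne : C.Nonempty := Finset.nonempty_iff_ne_empty.mpr
        (fun h => M.empty_not_mem (h ▸ hC))
      have hZsum : ∑ a ∈ Z \ C, v a = 0 := by
        have := Finset.sum_sdiff (f := v) hCZ
        rw [hsum, hCsum] at this
        simpa using this
      have hcard' : (Z \ C).card ≤ N := by
        have h1 : (Z \ C).card = Z.card - C.card := Finset.card_sdiff_of_subset hCZ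
        have h2 : 0 < C.card := Finset.card_pos.mpr hCne
        omega
      obtain ⟨S', hS'circ, hS'dis, hS'sup⟩ := ih (Z \ C) hcard' hZsum
      classical
      refine ⟨insert C S', ?_, ?_, ?_⟩
      · intro D hD
        rcases Finset.mem_insert.mp hD with rfl | hD'
        · exact hC
        · exact hS'circ hD'
      · rw [Finset.coe_insert]
        refine Set.PairwiseDisjoint.insert hS'dis ?_
        intro D hD _
        have hDsub : D ⊆ Z \ C := hS'sup ▸ Finset.le_sup (f := id) hD
        have : Disjoint C D := Finset.disjoint_left.mpr
          (fun a haC haD => (Finset.mem_sdiff.mp (hDsub haD)).2 haC)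
        exact this
      · rw [Finset.sup_insert, ← hS'sup]
        simp only [id]
        rw [Finset.sup_eq_union, Finset.union_comm]
        exact (Finset.sdiff_union_of_subset hCZ).symm

/-- sum over symmDiff is zero. -/
lemma symmdiff_sum_zero (A B : Finset (Fin n)) (hA : ∑ a ∈ A, v a = 0)
    (hB : ∑ a ∈ B, v a = 0) : ∑ a ∈ A ∆ B, v a = 0 := by
  classical
  have hd : Disjoint (A \ B) (B \ A) := disjoint_sdiff_sdiff
  have h1 : A ∆ B = (A \ B) ∪ (B \ A) := by
    rw [symmDiff_def]; rfl
  have key : ∀ X Y : Finset (Fin n), (∑ a ∈ X, v a = 0) →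
      ∑ a ∈ X \ Y, v a = - ∑ a ∈ X ∩ Y, v a := by
    intro X Y hX
    have hsub : X ∩ Y ⊆ X := Finset.inter_subset_left
    have := Finset.sum_sdiff (f := v) hsub
    rw [Finset.sdiff_inter_self_left] at this
    rw [hX] at this
    linear_combination (norm := abel) this
  have e1 := key A B hA
  have e2 := key B A hB
  rw [Finset.inter_comm] at e2
  rw [h1, Finset.sum_union hd, e1, e2]
  ext j
  simp only [Pi.add_apply, Pi.neg_apply, Pi.zero_apply, neg_neg]
  generalize (∑ a ∈ A ∩ B, v a) j = z
  revert z; exact (by decide : ∀ z : ZMod 2, -z + -z = 0)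

end Binary2

lemma binarySD_of_represents {n : ℕ} (M : CircuitSet n)
    (hrep : Represents (ZMod 2) M) : M.BinarySD := by
  obtain ⟨m, v, hv⟩ := hrep
  intro C₁ h₁ C₂ h₂
  exact decomp_of_sum_zero M v hv (C₁ ∆ C₂).card (C₁ ∆ C₂) le_rfl
    (symmdiff_sum_zero M v hv C₁ C₂
      (circuit_sum_zero M v hv C₁ h₁) (circuit_sum_zero M v hv C₂ h₂))

lemma notV_iff {n : ℕ} (C : Finset (Fin n)) (hne : C.Nonempty) (x : Fin n → EReal) :
    x ∉ V C ↔ ∃ f ∈ C, ∀ k ∈ C, k ≠ f → x k < x f := by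
  constructor
  · intro hx
    obtain ⟨f, hf, hmax⟩ := C.exists_max_image x hne
    refine ⟨f, hf, fun k hk hkf => ?_⟩
    rcases lt_or_eq_of_le (hmax k hk) with h | h
    · exact h
    · exact absurd ⟨k, hk, f, hf, hkf, h, fun j hj => h ▸ hmax j hj⟩ hx
  · rintro ⟨f, hf, hlt⟩ ⟨i, hi, j, hj, hij, hxixj, hmax⟩
    have hif : i = f := by
      by_contra h
      exact absurd (hmax f hf) (not_le.mpr (hlt i hi h))
    have hjf : j = f := by
      by_contra h
      have := hlt j hj h
      rw [← hxixj, hif] at this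
      exact lt_irrefl _ this
    exact hij (hif.trans hjf.symm)

section Tropical
variable {n : ℕ} {M : CircuitSet n}

lemma chord_split (hb : M.BinarySD) (hs : M.Simple)
    {C D : Finset (Fin n)} (hC : C ∈ M.circuits) (hD : D ∈ M.circuits)
    {g : Fin n} (hgC : g ∉ C) (hDC : D \ C = {g}) :
    ∃ A ∈ M.circuits, A ∆ D = C ∧ A ∩ D = {g} := by
  classical
  have hgD : g ∈ D := by
    have : g ∈ D \ C := hDC ▸ Finset.mem_singleton_self g
    exact (Finset.mem_sdiff.mp this).1
  obtain ⟨S, hScirc, _, hSsup⟩ := hb C hC D hD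
  have hgCD : g ∈ C ∆ D := Finset.mem_symmDiff.mpr (Or.inr ⟨hgD, hgC⟩)
  rw [hSsup, Finset.mem_sup] at hgCD
  obtain ⟨A, hAS, hgA⟩ := hgCD
  have hA : A ∈ M.circuits := hScirc hAS
  have hAsub : A ⊆ C ∆ D := hSsup ▸ Finset.le_sup (f := id) hAS
  have hAD : A ≠ D := by
    rintro rfl
    have : A ⊆ {g} := by
      intro a ha
      rcases Finset.mem_symmDiff.mp (hAsub ha) with ⟨_, h2⟩ | ⟨h1, h2⟩
      · exact absurd ha h2
      · exact hDC ▸ Finset.mem_sdiff.mpr ⟨h1, h2⟩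
    have h2 := Finset.card_le_card this
    simp only [Finset.card_singleton] at h2
    have h3 := hs A hA
    omega
  have hDAsub : D ∆ A ⊆ C := by
    intro a ha
    rcases Finset.mem_symmDiff.mp ha with ⟨h1, h2⟩ | ⟨h1, h2⟩
    · by_contra haC
      have : a ∈ D \ C := Finset.mem_sdiff.mpr ⟨h1, haC⟩
      rw [hDC, Finset.mem_singleton] at this
      exact h2 (this ▸ hgA)
    · rcases Finset.mem_symmDiff.mp (hAsub h1) with ⟨h3, _⟩ | ⟨h3, _⟩
      · exact h3
      · exact absurd h3 h2
  obtain ⟨S₂, hS₂circ, _, hS₂sup⟩ := hb D hD A hA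
  have hallC : ∀ X ∈ S₂, X = C := by
    intro X hX
    refine M.antichain X (hS₂circ hX) C hC ?_
    exact (hS₂sup ▸ Finset.le_sup (f := id) hX).trans hDAsub
  have hS₂ne : S₂.Nonempty := by
    rw [Finset.nonempty_iff_ne_empty]
    rintro rfl
    simp only [Finset.sup_empty] at hS₂sup
    exact hAD ((symmDiff_eq_bot.mp hS₂sup).symm)
  have hDA : D ∆ A = C := by
    obtain ⟨X, hX⟩ := hS₂ne
    refine le_antisymm hDAsub ?_
    rw [hS₂sup]
    exact (hallC X hX) ▸ Finset.le_sup (f := id) hX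
  refine ⟨A, hA, symmDiff_comm A D ▸ hDA, ?_⟩
  ext a
  simp only [Finset.mem_inter, Finset.mem_singleton]
  constructor
  · rintro ⟨haA, haD⟩
    have haC : a ∉ C := by
      rw [← hDA]
      simp [Finset.mem_symmDiff, haA, haD]
    rcases Finset.mem_symmDiff.mp (hAsub haA) with ⟨h1, _⟩ | ⟨h1, h2⟩
    · exact absurd h1 haC
    · have : a ∈ D \ C := Finset.mem_sdiff.mpr ⟨h1, h2⟩
      rwa [hDC, Finset.mem_singleton] at this
  · rintro rfl
    exact ⟨hgA, hgD⟩

lemma chordless_witness (hs : M.Simple) {C : Finset (Fin n)} (hC : C ∈ M.circuits)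
    (hch : ∀ D ∈ M.circuits, D ≠ C → 2 ≤ (D \ C).card) :
    ∃ y ∈ TP n, y ∉ V C ∧ ∀ D ∈ M.circuits, D ≠ C → y ∈ V D := by
  classical
  have hCne : C.Nonempty := Finset.card_pos.mp (by have := hs C hC; omega)
  obtain ⟨f, hf⟩ := hCne
  set y : Fin n → EReal := fun i => if i = f ∨ i ∉ C then 0 else ⊥ with hy
  have hyval : ∀ i, y i = 0 ∨ y i = ⊥ := by
    intro i; by_cases h : i = f ∨ i ∉ C <;> simp [hy, h]
  refine ⟨y, ⟨fun i => ?_, f, ?_⟩, ?_, ?_⟩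
  · rcases hyval i with h | h <;> simp [h]
  · simp [hy]
  · rw [notV_iff C ⟨f, hf⟩]
    refine ⟨f, hf, fun k hk hkf => ?_⟩
    have h1 : y k = ⊥ := by simp [hy, hkf, hk]
    have h2 : y f = 0 := by simp [hy]
    rw [h1, h2]
    exact EReal.bot_lt_zero
  · intro D hD hDC
    set T : Finset (Fin n) := D.filter (fun i => i = f ∨ i ∉ C) with hT
    have hsub : D \ C ⊆ T := by
      intro u hu
      obtain ⟨h1, h2⟩ := Finset.mem_sdiff.mp hu
      exact Finset.mem_filter.mpr ⟨h1, Or.inr h2⟩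
    have hT2 : 1 < T.card := by
      have := hch D hD hDC
      have := Finset.card_le_card hsub
      omega
    obtain ⟨i, hi, j, hj, hij⟩ := Finset.one_lt_card.mp hT2
    obtain ⟨hiD, hip⟩ := Finset.mem_filter.mp hi
    obtain ⟨hjD, hjp⟩ := Finset.mem_filter.mp hj
    refine ⟨i, hiD, j, hjD, hij, ?_, fun k hk => ?_⟩
    · simp [hy, hip, hjp]
    · have h1 : y i = 0 := by simp [hy, hip]
      rw [h1]
      rcases hyval k with h | h <;> simp [h]

lemma violated_step (hb : M.BinarySD) (hs : M.Simple) (x : Fin n → EReal)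
    {C D : Finset (Fin n)} (hC : C ∈ M.circuits) (hxC : x ∉ V C)
    (hD : D ∈ M.circuits) (hDC : D ≠ C) (hsmall : (D \ C).card < 2) :
    ∃ C' ∈ M.circuits, x ∉ V C' ∧ C'.card < C.card := by
  classical
  have hCne : C.Nonempty := Finset.card_pos.mp (by have := hs C hC; omega)
  -- D \ C is a singleton
  have hcard1 : (D \ C).card = 1 := by
    rcases (by omega : (D \ C).card = 0 ∨ (D \ C).card = 1) with h | h
    · exfalso
      have : D ⊆ C := by
        intro a ha
        by_contra hac
        have : a ∈ D \ C := Finset.mem_sdiff.mpr ⟨ha, hac⟩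
        rw [Finset.card_eq_zero.mp h] at this
        simp at this
      exact hDC (M.antichain D hD C hC this)
    · exact h
  obtain ⟨g, hg⟩ := Finset.card_eq_one.mp hcard1
  have hgC : g ∉ C := by
    have : g ∈ D \ C := hg ▸ Finset.mem_singleton_self g
    exact (Finset.mem_sdiff.mp this).2
  obtain ⟨A, hA, hAD, hADg⟩ := chord_split hb hs hC hD hgC hg
  have hgA : g ∈ A := by
    have : g ∈ A ∩ D := hADg ▸ Finset.mem_singleton_self g
    exact (Finset.mem_inter.mp this).1
  have hgD : g ∈ D := by
    have : g ∈ A ∩ D := hADg ▸ Finset.mem_singleton_self g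
    exact (Finset.mem_inter.mp this).2
  obtain ⟨f, hfC, hflt⟩ := (notV_iff C hCne x).mp hxC
  -- the symmetric core argument
  have core : ∀ P Q : Finset (Fin n), P ∈ M.circuits → Q ∈ M.circuits →
      P ∩ Q = {g} → P ∆ Q = C → f ∈ P → f ∉ Q →
      ∃ C' ∈ M.circuits, x ∉ V C' ∧ C'.card < C.card := by
    intro P Q hP hQ hPQg hPQC hfP hfQ
    have hgP : g ∈ P := by
      have : g ∈ P ∩ Q := hPQg ▸ Finset.mem_singleton_self g
      exact (Finset.mem_inter.mp this).1
    have hgQ : g ∈ Q := by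
      have : g ∈ P ∩ Q := hPQg ▸ Finset.mem_singleton_self g
      exact (Finset.mem_inter.mp this).2
    have hPsub : ∀ a ∈ P, a ≠ g → a ∈ C ∧ a ∉ Q := by
      intro a haP hag
      have haQ : a ∉ Q := by
        intro haQ
        have : a ∈ P ∩ Q := Finset.mem_inter.mpr ⟨haP, haQ⟩
        rw [hPQg, Finset.mem_singleton] at this
        exact hag this
      exact ⟨hPQC ▸ Finset.mem_symmDiff.mpr (Or.inl ⟨haP, haQ⟩), haQ⟩
    have hQsub : ∀ a ∈ Q, a ≠ g → a ∈ C ∧ a ∉ P := by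
      intro a haQ hag
      have haP : a ∉ P := by
        intro haP
        have : a ∈ P ∩ Q := Finset.mem_inter.mpr ⟨haP, haQ⟩
        rw [hPQg, Finset.mem_singleton] at this
        exact hag this
      exact ⟨hPQC ▸ Finset.mem_symmDiff.mpr (Or.inr ⟨haQ, haP⟩), haP⟩
    -- cardinalities
    have hunion : C = (P.erase g) ∪ (Q.erase g) := by
      ext a
      simp only [Finset.mem_union, Finset.mem_erase]
      constructor
      · intro haC
        have hag : a ≠ g := fun h => hgC (h ▸ haC)
        rcases Finset.mem_symmDiff.mp (hPQC ▸ haC : a ∈ P ∆ Q) with ⟨h1, _⟩ | ⟨h1, _⟩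
        · exact Or.inl ⟨hag, h1⟩
        · exact Or.inr ⟨hag, h1⟩
      · rintro (⟨hag, haP⟩ | ⟨hag, haQ⟩)
        · exact (hPsub a haP hag).1
        · exact (hQsub a haQ hag).1
    have hdisj : Disjoint (P.erase g) (Q.erase g) := by
      rw [Finset.disjoint_left]
      intro a haP haQ
      obtain ⟨hag, haP'⟩ := Finset.mem_erase.mp haP
      obtain ⟨_, haQ'⟩ := Finset.mem_erase.mp haQ
      exact (hPsub a haP' hag).2 haQ'
    have hcards : C.card = P.card - 1 + (Q.card - 1) := by
      rw [hunion, Finset.card_union_of_disjoint hdisj,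
        Finset.card_erase_of_mem hgP, Finset.card_erase_of_mem hgQ]
    have hP3 := hs P hP
    have hQ3 := hs Q hQ
    rcases lt_or_ge (x g) (x f) with hgf | hgf
    · refine ⟨P, hP, (notV_iff P ⟨f, hfP⟩ x).mpr ⟨f, hfP, fun k hk hkf => ?_⟩, by omega⟩
      by_cases hkg : k = g
      · exact hkg ▸ hgf
      · exact hflt k (hPsub k hk hkg).1 hkf
    · refine ⟨Q, hQ, (notV_iff Q ⟨g, hgQ⟩ x).mpr ⟨g, hgQ, fun k hk hkg => ?_⟩, by omega⟩
      have hkC := (hQsub k hk hkg).1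
      have hkf : k ≠ f := fun h => hfQ (h ▸ hk)
      exact lt_of_lt_of_le (hflt k hkC hkf) hgf
  have hfAD : f ∈ A ∆ D := hAD ▸ hfC
  rcases Finset.mem_symmDiff.mp hfAD with ⟨h1, h2⟩ | ⟨h1, h2⟩
  · exact core A D hA hD hADg hAD h1 h2
  · refine core D A hD hA ?_ ?_ h1 h2
    · rw [Finset.inter_comm]; exact hADg
    · rw [symmDiff_comm]; exact hAD

lemma exists_chordless_violated (hb : M.BinarySD) (hs : M.Simple) (x : Fin n → EReal) :
    ∀ N : ℕ, ∀ C ∈ M.circuits, x ∉ V C → C.card ≤ N →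
    ∃ C' ∈ M.circuits, x ∉ V C' ∧ ∀ D ∈ M.circuits, D ≠ C' → 2 ≤ (D \ C').card := by
  intro N
  induction N with
  | zero =>
    intro C hC _ hcard
    exfalso
    have := hs C hC
    omega
  | succ N ih =>
    intro C hC hxC hcard
    by_cases hch : ∀ D ∈ M.circuits, D ≠ C → 2 ≤ (D \ C).card
    · exact ⟨C, hC, hxC, hch⟩
    · push_neg at hch
      obtain ⟨D, hD, hDC, hsmall⟩ := hch
      obtain ⟨C', hC', hxC', hlt⟩ := violated_step hb hs x hC hxC hD hDC hsmall
      exact ih C' hC' hxC' (by omega)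

end Tropical


section Assembly
variable {n : ℕ} {M : CircuitSet n}

/-- The set of chordless circuits. -/
def chordlessSet (M : CircuitSet n) : Set (Finset (Fin n)) :=
  {C | C ∈ M.circuits ∧ ∀ D ∈ M.circuits, D ≠ C → 2 ≤ (D \ C).card}

lemma chordless_isBasis (hb : M.BinarySD) (hs : M.Simple) :
    IsTropicalBasis M (chordlessSet M) := by
  constructor
  · exact fun C hC => hC.1
  · apply Set.eq_of_subset_of_subset
    · rintro x ⟨hxTP, hxV⟩
      refine ⟨hxTP, Set.mem_iInter₂.mpr fun D hD => ?_⟩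
      by_contra hxD
      obtain ⟨C', hC', hxC', hch⟩ :=
        exists_chordless_violated hb hs x D.card D hD hxD le_rfl
      exact hxC' (Set.mem_iInter₂.mp hxV C' ⟨hC', hch⟩)
    · rintro x ⟨hxTP, hxV⟩
      exact ⟨hxTP, Set.mem_iInter₂.mpr fun D hD =>
        Set.mem_iInter₂.mp hxV D hD.1⟩

lemma chordless_subset_basis (hs : M.Simple) {B : Set (Finset (Fin n))}
    (hB : IsTropicalBasis M B) : chordlessSet M ⊆ B := by
  intro C hC
  by_contra hCB
  obtain ⟨y, hyTP, hyC, hyD⟩ := chordless_witness hs hC.1 hC.2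
  have hyL : y ∈ TP n ∩ ⋂ D ∈ B, V D := by
    refine ⟨hyTP, Set.mem_iInter₂.mpr fun D hD => ?_⟩
    exact hyD D (hB.1 hD) (fun h => hCB (h ▸ hD))
  rw [hB.2] at hyL
  exact hyC (Set.mem_iInter₂.mp hyL.2 C hC.1)

end Assembly

theorem stmt11 {n : ℕ} (M : CircuitSet n) (hs : M.Simple)
    (hreg : ∀ (K : Type) [Field K], Represents K M) :
    HasUniqueMinimalTropicalBasis M := by
  have hb : M.BinarySD := binarySD_of_represents M (hreg (ZMod 2))
  have hbasis := chordless_isBasis hb hs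
  refine ⟨chordlessSet M, ⟨hbasis, ?_⟩, ?_⟩
  · intro B' hB' hB'basis
    exact hB'.2 (chordless_subset_basis hs hB'basis)
  · rintro B ⟨hBbasis, hBmin⟩
    have hsub : chordlessSet M ⊆ B := chordless_subset_basis hs hBbasis
    by_contra hne
    exact hBmin (chordlessSet M) ⟨hsub, fun h => hne (subset_antisymm h hsub)⟩ hbasis
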